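/- The function l(x_1,...,x_p) = p! · exp(-sum_{k=1}^p x_k) · [1 + sum_{k=1}^p exp(-x_k)]^{-(p+1)} is a probability density on ℝ^p, and its cumulative distribution function is L(x_1,...,x_p) = [1 + sum_{k=1}^p exp(-x_k)]^{-1}. -/

import Mathlib

open MeasureTheory Set Filter

section OneDim

private lemma aux_deriv (c : ℝ) (hc : 0 < c) (m : ℕ) (t : ℝ) :
    HasDerivAt (fun t => ((m:ℝ)+1)⁻¹ * ((c + Real.exp (-t)) ^ (m+1))⁻¹)
      (Real.exp (-t) * ((c + Real.exp (-t)) ^ (m+2))⁻¹) t := by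
  have hu : HasDerivAt (fun t : ℝ => c + Real.exp (-t)) (-Real.exp (-t)) t := by
    simpa using ((Real.hasDerivAt_exp (-t)).comp t ((hasDerivAt_id t).neg)).const_add c
  have hpos : 0 < c + Real.exp (-t) := by positivity
  have h2 := ((hu.pow (m+1)).inv (pow_ne_zero _ hpos.ne')).const_mul ((m:ℝ)+1)⁻¹
  refine h2.congr_deriv ?_
  have hne : c + Real.exp (-t) ≠ 0 := hpos.ne'
  have hm : ((m:ℝ)+1) ≠ 0 := by positivity
  simp only [Pi.pow_apply, Nat.add_sub_cancel, Nat.cast_add, Nat.cast_one]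
  field_simp
  ring

private lemma aux_cont (c : ℝ) (hc : 0 < c) (n : ℕ) :
    Continuous (fun t => Real.exp (-t) * ((c + Real.exp (-t)) ^ (n+1))⁻¹) := by
  have he : Continuous fun t : ℝ => Real.exp (-t) :=
    Real.continuous_exp.comp continuous_neg
  exact he.mul (((continuous_const.add he).pow _).inv₀
    (fun t => pow_ne_zero _ (add_pos hc (Real.exp_pos _)).ne'))

private lemma aux_integrable (c : ℝ) (hc : 0 < c) (m : ℕ) :
    Integrable (fun t => Real.exp (-t) * ((c + Real.exp (-t)) ^ (m+2))⁻¹) := by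
  have hmeas := (aux_cont c hc (m+1)).aestronglyMeasurable (μ := volume)
  have hnneg : ∀ t : ℝ, 0 ≤ Real.exp (-t) * ((c + Real.exp (-t)) ^ (m+2))⁻¹ := by
    intro t; positivity
  rw [← integrableOn_univ, ← Set.Iic_union_Ioi (a := (0:ℝ)), integrableOn_union]
  constructor
  · refine Integrable.mono' (g := Real.exp) (integrableOn_exp_Iic 0)
      hmeas.restrict ?_
    filter_upwards [ae_restrict_mem measurableSet_Iic] with t ht
    rw [Real.norm_eq_abs, abs_of_nonneg (hnneg t)]
    have h1 : Real.exp (-t) ^ (m+2) ≤ (c + Real.exp (-t)) ^ (m+2) :=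
      pow_le_pow_left₀ (Real.exp_nonneg _) (by linarith) _
    have h2 : ((c + Real.exp (-t)) ^ (m+2))⁻¹ ≤ (Real.exp (-t) ^ (m+2))⁻¹ := by
      apply inv_anti₀ (by positivity) h1
    calc Real.exp (-t) * ((c + Real.exp (-t)) ^ (m+2))⁻¹
        ≤ Real.exp (-t) * (Real.exp (-t) ^ (m+2))⁻¹ := by
          exact mul_le_mul_of_nonneg_left h2 (Real.exp_nonneg _)
      _ = Real.exp ((m+1) * t) := by
          rw [← Real.exp_nat_mul, ← Real.exp_neg]
          rw [← Real.exp_add]; ring_nf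
          congr 1; push_cast; ring
      _ ≤ Real.exp t := by
          apply Real.exp_le_exp.2
          nlinarith [ht.out]
  · refine Integrable.mono' (g := fun t => (c ^ (m+2))⁻¹ * Real.exp (-(1:ℝ) * t))
      (((exp_neg_integrableOn_Ioi 0 one_pos).const_mul _)) hmeas.restrict ?_
    filter_upwards [] with t
    rw [Real.norm_eq_abs, abs_of_nonneg (hnneg t)]
    have h1 : c ^ (m+2) ≤ (c + Real.exp (-t)) ^ (m+2) :=
      pow_le_pow_left₀ hc.le (by nlinarith [Real.exp_nonneg (-t)]) _
    have h2 : ((c + Real.exp (-t)) ^ (m+2))⁻¹ ≤ (c ^ (m+2))⁻¹ :=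
      inv_anti₀ (by positivity) h1
    have := mul_le_mul_of_nonneg_left h2 (Real.exp_nonneg (-t))
    calc Real.exp (-t) * ((c + Real.exp (-t)) ^ (m+2))⁻¹
        ≤ Real.exp (-t) * (c ^ (m+2))⁻¹ := this
      _ = (c ^ (m+2))⁻¹ * Real.exp (-(1:ℝ) * t) := by rw [neg_one_mul]; ring

private lemma aux_tendsto_bot (c : ℝ) (hc : 0 < c) (m : ℕ) :
    Tendsto (fun t => ((m:ℝ)+1)⁻¹ * ((c + Real.exp (-t)) ^ (m+1))⁻¹) atBot (nhds 0) := by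
  have h1 : Tendsto (fun t : ℝ => c + Real.exp (-t)) atBot atTop :=
    tendsto_atTop_add_const_left _ c (Real.tendsto_exp_atTop.comp tendsto_neg_atBot_atTop)
  have h2 : Tendsto (fun t : ℝ => (c + Real.exp (-t)) ^ (m+1)) atBot atTop :=
    (tendsto_pow_atTop (by omega)).comp h1
  simpa using (h2.inv_tendsto_atTop).const_mul ((m:ℝ)+1)⁻¹

private lemma aux_integral_Iic (c : ℝ) (hc : 0 < c) (m : ℕ) (a : ℝ) :
    ∫ t in Set.Iic a, Real.exp (-t) * ((c + Real.exp (-t)) ^ (m+2))⁻¹ =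
      ((m:ℝ)+1)⁻¹ * ((c + Real.exp (-a)) ^ (m+1))⁻¹ := by
  rw [integral_Iic_of_hasDerivAt_of_tendsto' (fun t _ => aux_deriv c hc m t)
    (aux_integrable c hc m).integrableOn (aux_tendsto_bot c hc m)]
  simp

private lemma aux_integral (c : ℝ) (hc : 0 < c) (m : ℕ) :
    ∫ t, Real.exp (-t) * ((c + Real.exp (-t)) ^ (m+2))⁻¹ =
      ((m:ℝ)+1)⁻¹ * (c ^ (m+1))⁻¹ := by
  have htop : Tendsto (fun t => ((m:ℝ)+1)⁻¹ * ((c + Real.exp (-t)) ^ (m+1))⁻¹) atTop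
      (nhds (((m:ℝ)+1)⁻¹ * (c ^ (m+1))⁻¹)) := by
    have h1 : Tendsto (fun t : ℝ => c + Real.exp (-t)) atTop (nhds c) := by
      simpa using tendsto_const_nhds.add
        (Real.tendsto_exp_atBot.comp tendsto_neg_atTop_atBot)
    exact (((h1.pow (m+1)).inv₀ (pow_ne_zero _ hc.ne')).const_mul _)
  rw [integral_of_hasDerivAt_of_tendsto (fun t => aux_deriv c hc m t)
    (aux_integrable c hc m) (aux_tendsto_bot c hc m) htop]
  simp

end OneDim

noncomputable def mlogisG (p : ℕ) (c : ℝ) (y : Fin p → ℝ) : ℝ :=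
  Real.exp (-∑ k, y k) * ((c + ∑ k, Real.exp (-y k)) ^ (p + 1))⁻¹

lemma mlogisG_pos_base (p : ℕ) (c : ℝ) (hc : 0 < c) (y : Fin p → ℝ) :
    0 < c + ∑ k, Real.exp (-y k) := by
  have : (0:ℝ) ≤ ∑ k, Real.exp (-y k) :=
    Finset.sum_nonneg fun k _ => (Real.exp_pos _).le
  linarith

lemma mlogisG_cont (p : ℕ) (c : ℝ) (hc : 0 < c) : Continuous (mlogisG p c) := by
  have he : Continuous fun y : Fin p → ℝ => ∑ k, Real.exp (-y k) :=
    continuous_finset_sum _ fun k _ => Real.continuous_exp.comp (continuous_apply k).neg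
  exact (Real.continuous_exp.comp
      (continuous_finset_sum _ fun k _ => (continuous_apply k)).neg).mul
    (((continuous_const.add he).pow _).inv₀
      fun y => pow_ne_zero _ (mlogisG_pos_base p c hc y).ne')

lemma mlogisG_nonneg (p : ℕ) (c : ℝ) (hc : 0 < c) (y : Fin p → ℝ) : 0 ≤ mlogisG p c y := by
  have := mlogisG_pos_base p c hc y
  unfold mlogisG
  positivity

lemma mlogis_key (p : ℕ) : ∀ c : ℝ, 0 < c →
    Integrable (mlogisG p c) ∧
    ((∫ y, mlogisG p c y) = ((p.factorial : ℝ) * c)⁻¹) ∧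
    (∀ x : Fin p → ℝ, (∫ y in Set.univ.pi fun k => Set.Iic (x k), mlogisG p c y)
        = ((p.factorial : ℝ) * (c + ∑ k, Real.exp (-x k)))⁻¹) := by
  induction p with
  | zero =>
    intro c hc
    haveI : IsProbabilityMeasure (volume : Measure (Fin 0 → ℝ)) :=
      ⟨by rw [volume_pi, Measure.pi_univ]; simp⟩
    have hg : mlogisG 0 c = fun _ => c⁻¹ := by
      funext y; simp [mlogisG]
    refine ⟨?_, ?_, ?_⟩
    · rw [hg]; exact integrable_const _
    · rw [hg]; simp
    · intro x
      have hs : (Set.univ.pi fun k : Fin 0 => Set.Iic (x k)) = Set.univ := by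
        ext y; simp
      rw [hs, hg, Measure.restrict_univ]; simp
  | succ p IH =>
    intro c hc
    obtain ⟨IH1, IH2, -⟩ := IH c hc
    set E := (MeasurableEquiv.piFinSuccAbove (fun _ : Fin (p+1) => ℝ) (Fin.last p)).trans
      (MeasurableEquiv.prodComm (α := ℝ) (β := Fin p → ℝ)) with hE
    have mpE : MeasurePreserving E volume volume :=
      Measure.measurePreserving_swap.comp
        (volume_preserving_piFinSuccAbove (fun _ : Fin (p+1) => ℝ) (Fin.last p))
    have mpE' : MeasurePreserving E.symm volume volume := mpE.symm E
    have hEsymm : ∀ (y : Fin p → ℝ) (t : ℝ), E.symm (y, t) = Fin.snoc y t := by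
      intro y t
      show (MeasurableEquiv.piFinSuccAbove (fun _ : Fin (p+1) => ℝ) (Fin.last p)).symm (t, y)
        = Fin.snoc y t
      rw [MeasurableEquiv.piFinSuccAbove_symm_apply]
      simp [Fin.insertNthEquiv, Fin.insertNth_last]
    have hc' : ∀ y : Fin p → ℝ, 0 < c + ∑ k, Real.exp (-y k) :=
      fun y => mlogisG_pos_base p c hc y
    have hfval : ∀ (y : Fin p → ℝ) (t : ℝ), mlogisG (p+1) c (E.symm (y,t)) =
        Real.exp (-∑ k, y k) *
          (Real.exp (-t) * (((c + ∑ k, Real.exp (-y k)) + Real.exp (-t)) ^ (p+2))⁻¹) := by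
      intro y t
      rw [hEsymm]
      simp only [mlogisG, Fin.sum_univ_castSucc, Fin.snoc_castSucc, Fin.snoc_last,
        neg_add, Real.exp_add]
      ring_nf
    have hinner_full : ∀ y : Fin p → ℝ,
        (∫ t, mlogisG (p+1) c (E.symm (y,t))) = ((p:ℝ)+1)⁻¹ * mlogisG p c y := by
      intro y
      simp only [hfval]
      rw [integral_const_mul _ _, aux_integral _ (hc' y) p]
      unfold mlogisG; ring
    have hinner_Iic : ∀ (a : ℝ) (y : Fin p → ℝ),
        (∫ t in Set.Iic a, mlogisG (p+1) c (E.symm (y,t)))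
          = ((p:ℝ)+1)⁻¹ * mlogisG p (c + Real.exp (-a)) y := by
      intro a y
      simp only [hfval]
      rw [integral_const_mul _ _, aux_integral_Iic _ (hc' y) p a]
      unfold mlogisG; ring_nf
    have hmeasf : AEStronglyMeasurable
        (fun z : (Fin p → ℝ) × ℝ => mlogisG (p+1) c (E.symm z)) volume :=
      ((mlogisG_cont (p+1) c hc).measurable.comp E.symm.measurable).aestronglyMeasurable
    have hint_f : Integrable (fun z : (Fin p → ℝ) × ℝ => mlogisG (p+1) c (E.symm z)) := by
      refine (integrable_prod_iff hmeasf).2 ⟨?_, ?_⟩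
      · filter_upwards [] with y
        simp only [hfval]
        exact ((aux_integrable _ (hc' y) p).const_mul _)
      · have heq : (fun y : Fin p → ℝ => ∫ t, ‖mlogisG (p+1) c (E.symm (y,t))‖)
            = fun y => ((p:ℝ)+1)⁻¹ * mlogisG p c y := by
          funext y
          rw [← hinner_full y]
          apply integral_congr_ae
          filter_upwards [] with t
          rw [Real.norm_eq_abs, abs_of_nonneg (mlogisG_nonneg (p+1) c hc _)]
        rw [heq]
        exact IH1.const_mul _
    have hint : Integrable (mlogisG (p+1) c) :=
      (mpE'.integrable_comp_emb E.symm.measurableEmbedding).mp hint_f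
    have hfac0 : ((p.factorial : ℝ)) ≠ 0 := Nat.cast_ne_zero.2 (Nat.factorial_ne_zero p)
    have hp1 : ((p:ℝ)+1) ≠ 0 := by positivity
    refine ⟨hint, ?_, ?_⟩
    · calc ∫ y, mlogisG (p+1) c y
          = ∫ z : (Fin p → ℝ) × ℝ, mlogisG (p+1) c (E.symm z) :=
            (mpE'.integral_comp E.symm.measurableEmbedding _).symm
        _ = ∫ y : Fin p → ℝ, ∫ t, mlogisG (p+1) c (E.symm (y, t)) := integral_prod _ hint_f
        _ = ∫ y : Fin p → ℝ, ((p:ℝ)+1)⁻¹ * mlogisG p c y := by simp only [hinner_full]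
        _ = ((p:ℝ)+1)⁻¹ * ((p.factorial : ℝ) * c)⁻¹ := by rw [integral_const_mul _ _, IH2]
        _ = (((p+1).factorial : ℝ) * c)⁻¹ := by
            rw [Nat.factorial_succ]
            push_cast
            field_simp
    · intro x
      have hc'' : 0 < c + Real.exp (-(x (Fin.last p))) := by positivity
      have hpre : E.symm ⁻¹' (Set.univ.pi fun k => Set.Iic (x k)) =
          (Set.univ.pi fun k : Fin p => Set.Iic (x (Fin.castSucc k))) ×ˢ
            Set.Iic (x (Fin.last p)) := by
        ext ⟨y, t⟩
        simp only [Set.mem_preimage, hEsymm, Set.mem_pi, Set.mem_univ, forall_true_left,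
          Set.mem_prod, Set.mem_Iic, Fin.forall_fin_succ', Fin.snoc_castSucc, Fin.snoc_last]
        try tauto
      calc ∫ y in Set.univ.pi fun k => Set.Iic (x k), mlogisG (p+1) c y
          = ∫ z in E.symm ⁻¹' (Set.univ.pi fun k => Set.Iic (x k)),
              mlogisG (p+1) c (E.symm z) :=
            (mpE'.setIntegral_preimage_emb E.symm.measurableEmbedding _ _).symm
        _ = ∫ y in (Set.univ.pi fun k : Fin p => Set.Iic (x (Fin.castSucc k))),
              ∫ t in Set.Iic (x (Fin.last p)), mlogisG (p+1) c (E.symm (y, t)) := by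
            rw [hpre]
            exact setIntegral_prod _ hint_f.integrableOn
        _ = ∫ y in (Set.univ.pi fun k : Fin p => Set.Iic (x (Fin.castSucc k))),
              ((p:ℝ)+1)⁻¹ * mlogisG p (c + Real.exp (-(x (Fin.last p)))) y := by
            simp only [hinner_Iic]
        _ = ((p:ℝ)+1)⁻¹ * ((p.factorial : ℝ) *
              ((c + Real.exp (-(x (Fin.last p)))) +
                ∑ k : Fin p, Real.exp (-(x (Fin.castSucc k)))))⁻¹ := by
            rw [integral_const_mul _ _, (IH _ hc'').2.2 (fun k => x (Fin.castSucc k))]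
        _ = (((p+1).factorial : ℝ) * (c + ∑ k, Real.exp (-x k)))⁻¹ := by
            rw [Fin.sum_univ_castSucc (f := fun k => Real.exp (-x k)), Nat.factorial_succ]
            have hD : 0 < c + (∑ k : Fin p, Real.exp (-x (Fin.castSucc k)) +
                Real.exp (-x (Fin.last p))) := by
              have : (0:ℝ) ≤ ∑ k : Fin p, Real.exp (-x (Fin.castSucc k)) :=
                Finset.sum_nonneg fun k _ => (Real.exp_pos _).le
              nlinarith [Real.exp_pos (-x (Fin.last p))]
            push_cast
            have h1 : (0:ℝ) < c + Real.exp (-x (Fin.last p)) +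
                ∑ k : Fin p, Real.exp (-x (Fin.castSucc k)) := by
              have : (0:ℝ) ≤ ∑ k : Fin p, Real.exp (-x (Fin.castSucc k)) :=
                Finset.sum_nonneg fun k _ => (Real.exp_pos _).le
              nlinarith [Real.exp_pos (-x (Fin.last p))]
            rw [mul_inv, mul_inv, mul_inv]
            rw [show c + (∑ k : Fin p, Real.exp (-x (Fin.castSucc k)) +
                Real.exp (-x (Fin.last p))) = c + Real.exp (-x (Fin.last p)) +
                ∑ k : Fin p, Real.exp (-x (Fin.castSucc k)) by ring]
            field_simp

theorem multivariate_logistic_density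
    (p : ℕ)
    (l : (Fin p → ℝ) → ℝ)
    (hl : l = fun x => (p.factorial : ℝ) * Real.exp (-∑ k, x k) *
      ((1 + ∑ k, Real.exp (-x k)) ^ (p + 1))⁻¹) :
    (∀ x, 0 ≤ l x) ∧
    (∫ x : Fin p → ℝ, l x = 1) ∧
    (∀ x : Fin p → ℝ,
      ∫ y in {y : Fin p → ℝ | ∀ k, y k ≤ x k}, l y =
        (1 + ∑ k, Real.exp (-x k))⁻¹) := by
  obtain ⟨hint, hfull, hcdf⟩ := mlogis_key p 1 one_pos
  have hfac0 : ((p.factorial : ℝ)) ≠ 0 := Nat.cast_ne_zero.2 (Nat.factorial_ne_zero p)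
  have hleq : l = fun x => (p.factorial : ℝ) * mlogisG p 1 x := by
    rw [hl]; funext x; rw [mlogisG]; ring
  refine ⟨?_, ?_, ?_⟩
  · intro x
    rw [hleq]
    exact mul_nonneg (by positivity) (mlogisG_nonneg p 1 one_pos x)
  · rw [hleq]
    rw [integral_const_mul, hfull]
    field_simp
  · intro x
    have hs : {y : Fin p → ℝ | ∀ k, y k ≤ x k} =
        Set.univ.pi fun k => Set.Iic (x k) := by
      ext y; simp [Set.mem_pi, Pi.le_def]
    rw [hleq, hs]
    rw [integral_const_mul, hcdf x]
    have hD : (0:ℝ) < 1 + ∑ k, Real.exp (-x k) := mlogisG_pos_base p 1 one_pos x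
    field_simp
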